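/- Let (X_k) be a family of random variables that is uniformly integrable. Then there exists a convex, increasing function Φ: [0,∞) → [0,∞) with Φ(0)=0 and lim_{x→∞} Φ(x)/x = ∞ such that sup_k E[Φ(|X_k|)] < ∞ (de La Vallée-Poussin criterion, necessity direction). -/

import Mathlib

open MeasureTheory Filter Set

/-- Uniform integrability of a family: sup of tail expectations tends to 0. -/
def UnifInt {Ω ι : Type*} [MeasurableSpace Ω] (μ : Measure Ω) (f : ι → Ω → ℝ) : Prop :=
  ∀ ε : ℝ, 0 < ε → ∃ C : ℝ, 0 < C ∧ ∀ i, ∫ ω in {ω | C < |f i ω|}, |f i ω| ∂μ ≤ ε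

noncomputable def vpPhi (C : ℕ → ℝ) (x : ℝ) : ℝ := ∑' n : ℕ, max (x - C n) 0

section aux
variable {C : ℕ → ℝ}

lemma vp_summable (hC : ∀ n : ℕ, (n : ℝ) + 1 ≤ C n) (x : ℝ) : Summable (fun n => max (x - C n) 0) := by
  apply summable_of_ne_finset_zero (s := Finset.range ⌈x⌉₊)
  intro n hn
  simp only [Finset.mem_range, not_lt] at hn
  have hx : x ≤ C n := by
    calc x ≤ (⌈x⌉₊ : ℝ) := Nat.le_ceil x
    _ ≤ (n : ℝ) := by exact_mod_cast hn
    _ ≤ (n : ℝ) + 1 := by linarith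
    _ ≤ C n := hC n
  exact max_eq_right (by linarith)

lemma vpPhi_mono (hC : ∀ n : ℕ, (n : ℝ) + 1 ≤ C n) : Monotone (vpPhi C) := by
  intro x y hxy
  exact Summable.tsum_le_tsum (fun n => max_le_max (by linarith) le_rfl)
    (vp_summable hC x) (vp_summable hC y)

lemma vpPhi_nonneg (x : ℝ) : 0 ≤ vpPhi C x :=
  tsum_nonneg fun n => le_max_right _ _

lemma vpPhi_zero (hC : ∀ n : ℕ, (n : ℝ) + 1 ≤ C n) : vpPhi C 0 = 0 := by
  have : (fun n => max (0 - C n) 0) = fun _ : ℕ => (0 : ℝ) := by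
    funext n
    have := hC n
    have hn : (0:ℝ) ≤ (n:ℝ) := Nat.cast_nonneg n
    exact max_eq_right (by linarith)
  rw [vpPhi, this, tsum_zero]

lemma vpPhi_convex (hC : ∀ n : ℕ, (n : ℝ) + 1 ≤ C n) : ConvexOn ℝ (Set.Ici (0:ℝ)) (vpPhi C) := by
  refine ⟨convex_Ici 0, fun x _ y _ a b ha hb hab => ?_⟩
  have hsum : Summable fun n => a * max (x - C n) 0 + b * max (y - C n) 0 :=
    ((vp_summable hC x).mul_left a).add ((vp_summable hC y).mul_left b)
  calc vpPhi C (a • x + b • y)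
      ≤ ∑' n, (a * max (x - C n) 0 + b * max (y - C n) 0) := by
        refine Summable.tsum_le_tsum (fun n => ?_) (vp_summable hC _) hsum
        have h1 : a • x + b • y - C n = a * (x - C n) + b * (y - C n) := by
          simp only [smul_eq_mul]; linear_combination C n * hab
        refine max_le ?_ ?_
        · rw [h1]
          gcongr
          · exact le_max_left _ _
          · exact le_max_left _ _
        · positivity
    _ = a * vpPhi C x + b * vpPhi C y := by
        rw [Summable.tsum_add ((vp_summable hC x).mul_left a) ((vp_summable hC y).mul_left b),
          tsum_mul_left, tsum_mul_left]
        rfl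
    _ = a • vpPhi C x + b • vpPhi C y := by simp [smul_eq_mul]

lemma vpPhi_tendsto (hC : ∀ n : ℕ, (n : ℝ) + 1 ≤ C n) : Tendsto (fun x : ℝ => vpPhi C x / x) atTop atTop := by
  rw [tendsto_atTop]
  intro b
  set N : ℕ := ⌈b⌉₊ + 1 with hN
  set S : ℝ := ∑ n ∈ Finset.range N, C n with hS
  have hS0 : 1 ≤ S := by
    calc (1:ℝ) ≤ C 0 := by have := hC 0; push_cast at this; linarith
    _ ≤ S := by
      rw [hS]
      apply Finset.single_le_sum (f := fun n => C n) (fun n _ => ?_) (by simp [hN])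
      have h1 := hC n
      have h2 : (0:ℝ) ≤ (n:ℝ) := Nat.cast_nonneg n
      linarith
  filter_upwards [eventually_ge_atTop (max S 1)] with x hx
  have hxS : S ≤ x := le_trans (le_max_left _ _) hx
  have hx1 : (1:ℝ) ≤ x := le_trans (le_max_right _ _) hx
  have hx0 : (0:ℝ) < x := by linarith
  have hlow : (N : ℝ) * x - S ≤ vpPhi C x := by
    have h1 : ∑ n ∈ Finset.range N, max (x - C n) 0 ≤ vpPhi C x :=
      Summable.sum_le_tsum _ (fun n _ => le_max_right _ _) (vp_summable hC x)
    have h2 : (N : ℝ) * x - S = ∑ n ∈ Finset.range N, (x - C n) := by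
      rw [Finset.sum_sub_distrib, Finset.sum_const, Finset.card_range, hS]
      ring_nf
    have h3 : ∑ n ∈ Finset.range N, (x - C n) ≤ ∑ n ∈ Finset.range N, max (x - C n) 0 :=
      Finset.sum_le_sum fun n _ => le_max_left _ _
    linarith
  have : b ≤ (N : ℝ) - S / x := by
    have hNb : b + 1 ≤ (N : ℝ) := by
      have := Nat.le_ceil b
      push_cast [hN]
      linarith
    have hdiv : S / x ≤ 1 := by
      rw [div_le_one hx0]; exact hxS
    linarith
  calc b ≤ (N : ℝ) - S / x := this
  _ = ((N : ℝ) * x - S) / x := by field_simp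
  _ ≤ vpPhi C x / x := by gcongr

end aux

/-- de La Vallée-Poussin criterion, necessity direction. -/
theorem stmt_5 {Ω I : Type*} [MeasurableSpace Ω] (μ : Measure Ω) [IsProbabilityMeasure μ]
    (X : I → Ω → ℝ)
    (hXmeas : ∀ k, AEStronglyMeasurable (X k) μ)
    (hXint : ∀ k, Integrable (X k) μ)
    (hUI : UnifInt μ X) :
    ∃ Φ : ℝ → ℝ,
      ConvexOn ℝ (Set.Ici (0 : ℝ)) Φ ∧
      MonotoneOn Φ (Set.Ici (0 : ℝ)) ∧
      Φ 0 = 0 ∧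
      (∀ x : ℝ, 0 ≤ x → 0 ≤ Φ x) ∧
      Tendsto (fun x : ℝ => Φ x / x) atTop atTop ∧
      ∃ M : ℝ, ∀ k, ∫ ω, Φ |X k ω| ∂μ ≤ M := by
  -- choose thresholds
  have hpow : ∀ n : ℕ, (0:ℝ) < (1/2)^n := fun n => by positivity
  choose C' hC'pos hC'tail using fun n : ℕ => hUI ((1/2)^n) (hpow n)
  set C : ℕ → ℝ := fun n => max (C' n) ((n : ℝ) + 1) with hCdef
  have hC : ∀ n : ℕ, (n : ℝ) + 1 ≤ C n := fun n => le_max_right _ _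
  have hCC' : ∀ n, C' n ≤ C n := fun n => le_max_left _ _
  refine ⟨vpPhi C, vpPhi_convex hC, (vpPhi_mono hC).monotoneOn _, vpPhi_zero hC,
    fun x _ => vpPhi_nonneg x, vpPhi_tendsto hC, 2, fun k => ?_⟩
  -- the expectation bound
  have hXabs : Integrable (fun ω => |X k ω|) μ := (hXint k).abs
  -- term functions
  set g : ℕ → Ω → ℝ := fun n ω => max (|X k ω| - C n) 0 with hg
  have hgnonneg : ∀ n ω, 0 ≤ g n ω := fun n ω => le_max_right _ _
  have hgle : ∀ n ω, g n ω ≤ Set.indicator {ω | C n < |X k ω|} (fun ω => |X k ω|) ω := by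
    intro n ω
    rw [Set.indicator_apply]
    split_ifs with h
    · simp only [Set.mem_setOf_eq] at h
      have hCpos : (0:ℝ) < C n := lt_of_lt_of_le (by positivity) (hC n)
      refine max_le (by linarith) (abs_nonneg _)
    · simp only [Set.mem_setOf_eq, not_lt] at h
      exact max_le (by linarith) le_rfl
  have hXaem : AEMeasurable (fun ω => |X k ω|) μ :=
    measurable_abs.comp_aemeasurable (hXmeas k).aemeasurable
  have hgmeas : ∀ n, AEMeasurable (g n) μ := by
    intro n
    exact (hXaem.sub aemeasurable_const).max aemeasurable_const
  have hgsm : ∀ n, AEStronglyMeasurable (g n) μ := fun n => (hgmeas n).aestronglyMeasurable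
  have hgint : ∀ n, Integrable (g n) μ := by
    intro n
    refine hXabs.mono (hgsm n) (Filter.Eventually.of_forall fun ω => ?_)
    rw [Real.norm_eq_abs, Real.norm_eq_abs, abs_of_nonneg (hgnonneg n ω), abs_abs]
    have hCpos : (0:ℝ) < C n := lt_of_lt_of_le (by positivity) (hC n)
    exact max_le (by linarith [abs_nonneg (X k ω)]) (abs_nonneg _)
  -- each term integral bounded by (1/2)^n
  have hterm : ∀ n, ∫ ω, g n ω ∂μ ≤ (1/2)^n := by
    intro n
    set S : Set Ω := {ω | C n < |X k ω|} with hSdef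
    have hSnm : NullMeasurableSet S μ :=
      hXaem.nullMeasurable (measurableSet_Ioi : MeasurableSet (Set.Ioi (C n)))
    obtain ⟨T, hTsub, hTmeas, hTae⟩ := hSnm.exists_measurable_subset_ae_eq
    have hrestrict : μ.restrict S = μ.restrict T :=
      (Measure.restrict_congr_set hTae).symm
    have hTae' : ∀ᶠ ω in ae μ, (ω ∈ T ↔ ω ∈ S) := Filter.eventuallyEq_set.mp hTae
    have hindae : Set.indicator S (fun ω => |X k ω|) =ᶠ[ae μ]
        Set.indicator T (fun ω => |X k ω|) := by
      filter_upwards [hTae'] with ω hω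
      by_cases h : ω ∈ S
      · rw [Set.indicator_of_mem h, Set.indicator_of_mem (hω.mpr h)]
      · rw [Set.indicator_of_notMem h, Set.indicator_of_notMem (fun hT => h (hω.mp hT))]
    have hindint : Integrable (Set.indicator T (fun ω => |X k ω|)) μ :=
      hXabs.indicator hTmeas
    calc ∫ ω, g n ω ∂μ ≤ ∫ ω, Set.indicator T (fun ω => |X k ω|) ω ∂μ := by
          refine integral_mono_ae (hgint n) hindint ?_
          filter_upwards [hindae] with ω hω
          exact (hgle n ω).trans hω.le
      _ = ∫ ω in T, |X k ω| ∂μ := integral_indicator hTmeas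
      _ = ∫ ω in S, |X k ω| ∂μ := by rw [hrestrict]
      _ ≤ ∫ ω in {ω | C' n < |X k ω|}, |X k ω| ∂μ := by
          refine setIntegral_mono_set hXabs.integrableOn
            (Filter.Eventually.of_forall fun ω => abs_nonneg _) ?_
          refine Filter.Eventually.of_forall ?_
          intro ω hω
          exact lt_of_le_of_lt (hCC' n) hω
      _ ≤ (1/2)^n := hC'tail n k
  -- assemble via lintegral
  have hPhiMeas : AEStronglyMeasurable (fun ω => vpPhi C |X k ω|) μ := by
    have hm : Measurable (vpPhi C) := (vpPhi_mono hC).measurable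
    exact ((hm.comp measurable_abs).comp_aemeasurable
      (hXmeas k).aemeasurable).aestronglyMeasurable
  have hkey : ∫⁻ ω, ENNReal.ofReal (vpPhi C |X k ω|) ∂μ ≤ ENNReal.ofReal 2 := by
    have h1 : ∀ ω, ENNReal.ofReal (vpPhi C |X k ω|) = ∑' n, ENNReal.ofReal (g n ω) := by
      intro ω
      exact ENNReal.ofReal_tsum_of_nonneg (fun n => hgnonneg n ω) (vp_summable hC _)
    calc ∫⁻ ω, ENNReal.ofReal (vpPhi C |X k ω|) ∂μ
        = ∫⁻ ω, ∑' n, ENNReal.ofReal (g n ω) ∂μ := by simp_rw [h1]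
      _ = ∑' n, ∫⁻ ω, ENNReal.ofReal (g n ω) ∂μ :=
          lintegral_tsum fun n => (hgmeas n).ennreal_ofReal
      _ ≤ ∑' n, ENNReal.ofReal ((1/2)^n) := by
          refine ENNReal.tsum_le_tsum fun n => ?_
          rw [← ofReal_integral_eq_lintegral_ofReal (hgint n)
            (Filter.Eventually.of_forall fun ω => hgnonneg n ω)]
          exact ENNReal.ofReal_le_ofReal (hterm n)
      _ = ENNReal.ofReal 2 := by
          rw [← ENNReal.ofReal_tsum_of_nonneg (fun n => (hpow n).le)
            (summable_geometric_of_lt_one (by norm_num) (by norm_num))]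
          congr 1
          rw [tsum_geometric_of_lt_one (by norm_num) (by norm_num)]
          norm_num
  rw [integral_eq_lintegral_of_nonneg_ae
    (Filter.Eventually.of_forall fun ω => vpPhi_nonneg _) hPhiMeas]
  exact ENNReal.toReal_le_of_le_ofReal (by norm_num) hkey
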